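/- For b ∈ (0, π/2), the identity cos²b · ∫_{−b}^{b} dφ/(cos φ · √(cos⁴φ − cos⁴b)) = 2·(cos²b/√(1+cos²b))·Π(sin²b, sin b/√(1+cos²b)) holds. -/

import Mathlib

open Real Set intervalIntegral

/-- Complete elliptic integral of the third kind. -/
noncomputable def ellPi (n k : ℝ) : ℝ :=
  ∫ x in (0 : ℝ)..1,
    1 / ((1 - n * x ^ 2) * Real.sqrt (1 - x ^ 2) * Real.sqrt (1 - k ^ 2 * x ^ 2))

lemma image_Ioo_of_strictMonoOn {f : ℝ → ℝ} {a b : ℝ} (hab : a ≤ b)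
    (hm : StrictMonoOn f (Icc a b)) (hc : ContinuousOn f (Icc a b)) :
    f '' Ioo a b = Ioo (f a) (f b) := by
  apply Subset.antisymm
  · rintro _ ⟨x, hx, rfl⟩
    exact ⟨hm (left_mem_Icc.2 hab) (Ioo_subset_Icc_self hx) hx.1,
           hm (Ioo_subset_Icc_self hx) (right_mem_Icc.2 hab) hx.2⟩
  · exact intermediate_value_Ioo hab hc

set_option maxHeartbeats 1000000 in
/-- For `b ∈ (0, π/2)`,
`cos²b ∫_{−b}^{b} dφ/(cos φ √(cos⁴φ − cos⁴b))
  = 2 (cos²b/√(1+cos²b)) Π(sin²b, sin b/√(1+cos²b))`. -/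
theorem Xi_integral_eq_ellPi (b : ℝ) (hb : b ∈ Ioo 0 (π / 2)) :
    Real.cos b ^ 2 *
      ∫ φ in (-b)..b, 1 / (Real.cos φ * Real.sqrt (Real.cos φ ^ 4 - Real.cos b ^ 4)) =
    2 * (Real.cos b ^ 2 / Real.sqrt (1 + Real.cos b ^ 2)) *
      ellPi (Real.sin b ^ 2) (Real.sin b / Real.sqrt (1 + Real.cos b ^ 2)) := by
  obtain ⟨hb0, hb2⟩ := hb
  set s := Real.sin b with hs_def
  set c := Real.cos b with hc_def
  have hpi : (0:ℝ) < π / 2 := by positivity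
  have hs0 : 0 < s := Real.sin_pos_of_pos_of_lt_pi hb0 (by linarith [Real.pi_pos])
  have hs1 : s < 1 := by
    have h := Real.strictMonoOn_sin (a := b) (b := π/2)
      ⟨by linarith, by linarith⟩ ⟨by linarith, le_rfl⟩ hb2
    rwa [Real.sin_pi_div_two] at h
  have hc0 : 0 < c := Real.cos_pos_of_mem_Ioo ⟨by linarith, hb2⟩
  have hsc : s ^ 2 + c ^ 2 = 1 := Real.sin_sq_add_cos_sq b
  set r := Real.sqrt (1 + c ^ 2) with hr_def
  have hr0 : 0 < r := Real.sqrt_pos.2 (by positivity)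
  have hr2 : r ^ 2 = 1 + c ^ 2 := Real.sq_sqrt (by positivity)
  set k := s / r with hk_def
  have hk2 : k ^ 2 * r ^ 2 = s ^ 2 := by
    rw [hk_def, div_pow, div_mul_cancel₀ _ (pow_ne_zero 2 hr0.ne')]
  have hk1 : k ^ 2 < 1 := by
    rw [div_pow, div_lt_one (by positivity)]
    nlinarith
  clear_value s c r k
  -- basic bounds for every θ
  have hA : ∀ θ : ℝ, 0 < 1 - s ^ 2 * Real.sin θ ^ 2 := by
    intro θ
    nlinarith [Real.sin_sq_le_one θ, sq_nonneg (Real.sin θ), sq_nonneg s]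
  have hB : ∀ θ : ℝ, 0 < 1 - k ^ 2 * Real.sin θ ^ 2 := by
    intro θ
    nlinarith [Real.sin_sq_le_one θ, sq_nonneg (Real.sin θ), sq_nonneg k]
  set H : ℝ → ℝ := fun θ => 1 / ((1 - s ^ 2 * Real.sin θ ^ 2) *
      Real.sqrt (1 - k ^ 2 * Real.sin θ ^ 2)) with hH_def
  have hHcont : Continuous H := by
    apply Continuous.div continuous_const
    · exact (continuous_const.sub (continuous_const.mul (Real.continuous_sin.pow 2))).mul
        (Real.continuous_sqrt.comp
          (continuous_const.sub (continuous_const.mul (Real.continuous_sin.pow 2))))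
    · intro θ
      have := hA θ
      have := Real.sqrt_pos.2 (hB θ)
      positivity
  -- Step 1 : ellPi as a trigonometric integral
  have step1 : ellPi (s ^ 2) k = ∫ θ in Ioo 0 (π/2), H θ := by
    have himg : Real.sin '' Ioo 0 (π/2) = Ioo 0 1 := by
      have := image_Ioo_of_strictMonoOn hpi.le
        (Real.strictMonoOn_sin.mono (Icc_subset_Icc (by linarith) le_rfl))
        Real.continuous_sin.continuousOn
      simpa using this
    rw [ellPi, intervalIntegral.integral_of_le zero_le_one,
      MeasureTheory.integral_Ioc_eq_integral_Ioo, ← himg,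
      MeasureTheory.integral_image_eq_integral_abs_deriv_smul measurableSet_Ioo
        (fun θ _ => (Real.hasDerivAt_sin θ).hasDerivWithinAt)
        (Real.injOn_sin.mono (Ioo_subset_Icc_self.trans (Icc_subset_Icc (by linarith) le_rfl)))]
    apply MeasureTheory.setIntegral_congr_fun measurableSet_Ioo
    intro θ hθ
    simp only [smul_eq_mul]
    have hcosθ : 0 < Real.cos θ := Real.cos_pos_of_mem_Ioo ⟨by linarith [hθ.1], hθ.2⟩
    have hsq : Real.sqrt (1 - Real.sin θ ^ 2) = Real.cos θ := by
      rw [show 1 - Real.sin θ ^ 2 = Real.cos θ ^ 2 by nlinarith [Real.sin_sq_add_cos_sq θ],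
        Real.sqrt_sq hcosθ.le]
    have h1 := hA θ
    have h2 := Real.sqrt_pos.2 (hB θ)
    rw [abs_of_pos hcosθ, hsq]
    simp only [hH_def]
    field_simp
  -- Step 2 : substitution on the LHS
  have step2 : (∫ φ in Ioo (-b) b,
      1 / (Real.cos φ * Real.sqrt (Real.cos φ ^ 4 - c ^ 4))) =
      ∫ θ in Ioo (-(π/2)) (π/2), (1 / r) * H θ := by
    set f : ℝ → ℝ := fun θ => Real.arcsin (s * Real.sin θ) with hf_def
    set f' : ℝ → ℝ := fun θ => 1 / Real.sqrt (1 - (s * Real.sin θ) ^ 2) * (s * Real.cos θ)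
      with hf'_def
    have hmono : StrictMonoOn f (Icc (-(π/2)) (π/2)) := by
      intro x hx y hy hxy
      apply Real.strictMonoOn_arcsin
      · constructor <;> nlinarith [Real.neg_one_le_sin x, Real.sin_le_one x]
      · constructor <;> nlinarith [Real.neg_one_le_sin y, Real.sin_le_one y]
      · exact mul_lt_mul_of_pos_left (Real.strictMonoOn_sin hx hy hxy) hs0
    have hcont : ContinuousOn f (Icc (-(π/2)) (π/2)) :=
      (Real.continuous_arcsin.comp (continuous_const.mul Real.continuous_sin)).continuousOn
    have himg : f '' Ioo (-(π/2)) (π/2) = Ioo (-b) b := by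
      rw [image_Ioo_of_strictMonoOn (by linarith) hmono hcont]
      have h1 : f (π/2) = b := by
        simp only [hf_def, Real.sin_pi_div_two, mul_one, hs_def]
        exact Real.arcsin_sin (by linarith) (by linarith)
      have h2 : f (-(π/2)) = -b := by
        simp only [hf_def, Real.sin_neg, Real.sin_pi_div_two, mul_neg, mul_one,
          Real.arcsin_neg, hs_def]
        rw [Real.arcsin_sin (by linarith) (by linarith)]
      rw [h1, h2]
    have hderiv : ∀ θ ∈ Ioo (-(π/2)) (π/2), HasDerivWithinAt f (f' θ) (Ioo (-(π/2)) (π/2)) θ := by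
      intro θ _
      have hlt : |s * Real.sin θ| < 1 := by
        rw [abs_mul, abs_of_pos hs0]
        nlinarith [abs_sin_le_one θ, abs_nonneg (Real.sin θ)]
      have h1 : s * Real.sin θ ≠ -1 := by intro h; rw [h] at hlt; simp at hlt
      have h2 : s * Real.sin θ ≠ 1 := by intro h; rw [h] at hlt; simp at hlt
      exact ((Real.hasDerivAt_arcsin h1 h2).comp θ
        ((Real.hasDerivAt_sin θ).const_mul s)).hasDerivWithinAt
    rw [← himg, MeasureTheory.integral_image_eq_integral_abs_deriv_smul measurableSet_Ioo
      hderiv (hmono.injOn.mono Ioo_subset_Icc_self)]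
    apply MeasureTheory.setIntegral_congr_fun measurableSet_Ioo
    intro θ hθ
    simp only [smul_eq_mul]
    have hcosθ : 0 < Real.cos θ := Real.cos_pos_of_mem_Ioo hθ
    set t := Real.sin θ with ht_def
    have hu : 0 < 1 - s ^ 2 * t ^ 2 := hA θ
    have hu' : 0 < 1 - (s * t) ^ 2 := by nlinarith
    have hcos_arcsin : Real.cos (f θ) = Real.sqrt (1 - (s * t) ^ 2) := by
      rw [hf_def]; exact Real.cos_arcsin _
    have hsqrt_pos : 0 < Real.sqrt (1 - (s * t) ^ 2) := Real.sqrt_pos.2 hu'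
    have hcos4 : Real.cos (f θ) ^ 4 - c ^ 4 =
        (s * Real.cos θ * r) ^ 2 * (1 - k ^ 2 * t ^ 2) := by
      rw [hcos_arcsin, show (Real.sqrt (1 - (s*t)^2)) ^ 4 = ((1 - (s*t)^2)) ^ 2 by
        rw [show (4:ℕ) = 2*2 by norm_num, pow_mul, Real.sq_sqrt hu'.le]]
      have hct : Real.cos θ ^ 2 = 1 - t ^ 2 := by
        have := Real.sin_sq_add_cos_sq θ; rw [← ht_def] at this; linarith
      have e1 : ((1 - (s*t)^2)) ^ 2 - c ^ 4
          = (s^2 * (1 - t^2)) * ((1 + c^2) - s^2 * t^2) := by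
        linear_combination (-(1 + c^2 - s^2*t^2)) * hsc
      have e2 : (1 + c^2) - s^2 * t^2 = r^2 * (1 - k^2 * t^2) := by
        linear_combination t^2 * hk2 - hr2
      rw [e1, e2]
      linear_combination (-(s^2*r^2*(1-k^2*t^2))) * hct
    have hsqrt4 : Real.sqrt (Real.cos (f θ) ^ 4 - c ^ 4) =
        (s * Real.cos θ * r) * Real.sqrt (1 - k ^ 2 * t ^ 2) := by
      rw [hcos4, Real.sqrt_mul (sq_nonneg _), Real.sqrt_sq (by positivity)]
    have hkB : 0 < Real.sqrt (1 - k ^ 2 * t ^ 2) := Real.sqrt_pos.2 (hB θ)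
    rw [hsqrt4, hcos_arcsin]
    have habs : |f' θ| = 1 / Real.sqrt (1 - (s * t) ^ 2) * (s * Real.cos θ) := by
      simp only [hf'_def, ← ht_def]
      exact abs_of_pos (by positivity)
    rw [habs]
    simp only [hH_def, ← ht_def]
    have hms : Real.sqrt (1 - (s*t)^2) * Real.sqrt (1 - (s*t)^2) = 1 - (s*t)^2 :=
      Real.mul_self_sqrt hu'.le
    set X := Real.sqrt (1 - (s*t)^2) with hX_def
    set K := Real.sqrt (1 - k^2*t^2) with hK_def
    clear_value X K
    rw [show (1:ℝ) - s^2*t^2 = 1-(s*t)^2 from by ring, ← hms]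
    field_simp
  -- Step 3 : evenness
  have hHeven : ∀ x : ℝ, H (-x) = H x := by
    intro x; simp [hH_def, Real.sin_neg]
  have step3 : (∫ θ in (-(π/2))..(π/2), H θ) = 2 * ∫ θ in Ioo 0 (π/2), H θ := by
    have hint : ∀ u v : ℝ, IntervalIntegrable H MeasureTheory.volume u v :=
      fun u v => hHcont.intervalIntegrable u v
    rw [← intervalIntegral.integral_add_adjacent_intervals (hint (-(π/2)) 0) (hint 0 (π/2))]
    have : (∫ θ in (-(π/2))..(0:ℝ), H θ) = ∫ θ in (0:ℝ)..(π/2), H θ := by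
      have h := intervalIntegral.integral_comp_neg (a := (0:ℝ)) (b := π/2) (f := H)
      simp only [hHeven, neg_zero] at h
      rw [← h]
    rw [this, intervalIntegral.integral_of_le hpi.le,
      MeasureTheory.integral_Ioc_eq_integral_Ioo]
    ring
  -- Assemble
  have hLHS : (∫ φ in (-b)..b, 1 / (Real.cos φ * Real.sqrt (Real.cos φ ^ 4 - c ^ 4))) =
      (1/r) * (2 * ellPi (s ^ 2) k) := by
    rw [intervalIntegral.integral_of_le (by linarith), MeasureTheory.integral_Ioc_eq_integral_Ioo,
      step2, MeasureTheory.integral_const_mul, step1]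
    have : (∫ θ in Ioo (-(π/2)) (π/2), H θ) = ∫ θ in (-(π/2))..(π/2), H θ := by
      rw [intervalIntegral.integral_of_le (by linarith),
        MeasureTheory.integral_Ioc_eq_integral_Ioo]
    rw [this, step3]
  rw [hLHS]
  field_simp
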